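/- (Completeness of the m.p. scheme, single transition case.) Let h be a multivalued refinement of a Boolean model f, and let x → y be an asynchronous transition of h. Then for any m.p. state x̂ compatible with x, there exists a trajectory (of length at most 2) from x̂ in the m.p. dynamics of f ending at an m.p. state ŷ compatible with y. -/
import Mathlib


/-- Activity levels of the most permissive scheme: 0, 1, increasing, decreasing. -/
inductive MPLevel : Type
  | zero | one | inc | dec
deriving DecidableEq

/-- The set γ(x̂) of Boolean states compatible with an m.p. state x̂. -/
def mpGamma {n : ℕ} (x : Fin n → MPLevel) : Set (Fin n → Bool) :=
  {x' | ∀ j, (x j = MPLevel.zero → x' j = false) ∧ (x j = MPLevel.one → x' j = true)}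

/-- The set α(x) of Boolean states compatible with a multivalued state x. -/
def mvAlpha {n : ℕ} (m x : Fin n → ℕ) : Set (Fin n → Bool) :=
  {x' | ∀ j, (x j = 0 → x' j = false) ∧ (x j = m j → x' j = true)}

/-- Coordinatewise embedding of Boolean states into m.p. states. -/
def embBM {n : ℕ} (x : Fin n → Bool) : Fin n → MPLevel :=
  fun j => if x j then MPLevel.one else MPLevel.zero

/-- Embedding of a Boolean state into X = ∏ {0,…,m_j}, sending 1 to m_j. -/
def embX {n : ℕ} (m : Fin n → ℕ) (x : Fin n → Bool) : Fin n → ℕ :=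
  fun j => if x j then m j else 0

/-- Transition of the most permissive dynamics of f at coordinate j0. -/
def mpTransAt {n : ℕ} (f : (Fin n → Bool) → Fin n → Bool) (j0 : Fin n)
    (x y : Fin n → MPLevel) : Prop :=
  (∀ j, j ≠ j0 → y j = x j) ∧
    (((x j0 = MPLevel.zero ∨ x j0 = MPLevel.dec) ∧ (∃ x' ∈ mpGamma x, f x' j0 = true) ∧ y j0 = MPLevel.inc) ∨
     ((x j0 = MPLevel.one ∨ x j0 = MPLevel.inc) ∧ (∃ x' ∈ mpGamma x, f x' j0 = false) ∧ y j0 = MPLevel.dec) ∨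
     (x j0 = MPLevel.inc ∧ y j0 = MPLevel.one) ∨
     (x j0 = MPLevel.dec ∧ y j0 = MPLevel.zero))

/-- Transition of the most permissive dynamics of f. -/
def mpTrans {n : ℕ} (f : (Fin n → Bool) → Fin n → Bool) (x y : Fin n → MPLevel) : Prop :=
  ∃ j0, mpTransAt f j0 x y

/-- Transition of the partial J-most-permissive dynamics of f at coordinate j0. -/
def pmpTransAt {n : ℕ} (J : Set (Fin n)) (f : (Fin n → Bool) → Fin n → Bool) (j0 : Fin n)
    (x y : Fin n → MPLevel) : Prop :=
  (∀ j, j ≠ j0 → y j = x j) ∧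
    (((x j0 = MPLevel.zero ∨ x j0 = MPLevel.dec) ∧ (∃ x' ∈ mpGamma x, f x' j0 = true) ∧ y j0 = MPLevel.inc) ∨
     ((x j0 = MPLevel.one ∨ x j0 = MPLevel.inc) ∧ (∃ x' ∈ mpGamma x, f x' j0 = false) ∧ y j0 = MPLevel.dec) ∨
     (x j0 = MPLevel.inc ∧ y j0 = MPLevel.one) ∨
     (x j0 = MPLevel.dec ∧ y j0 = MPLevel.zero) ∨
     (j0 ∉ J ∧ x j0 = MPLevel.zero ∧ (∃ x' ∈ mpGamma x, f x' j0 = true) ∧ y j0 = MPLevel.one) ∨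
     (j0 ∉ J ∧ x j0 = MPLevel.one ∧ (∃ x' ∈ mpGamma x, f x' j0 = false) ∧ y j0 = MPLevel.zero))

/-- Transition of the partial J-most-permissive dynamics of f. -/
def pmpTrans {n : ℕ} (J : Set (Fin n)) (f : (Fin n → Bool) → Fin n → Bool)
    (x y : Fin n → MPLevel) : Prop :=
  ∃ j0, pmpTransAt J f j0 x y

/-- A state of X_{J m.p.}: coordinates outside J are Boolean. -/
def inXJ {n : ℕ} (J : Set (Fin n)) (x : Fin n → MPLevel) : Prop :=
  ∀ j, j ∉ J → (x j = MPLevel.zero ∨ x j = MPLevel.one)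

/-- Asynchronous transition of a Boolean model f. -/
def asyncTransB {n : ℕ} (f : (Fin n → Bool) → Fin n → Bool) (x y : Fin n → Bool) : Prop :=
  ∃ j0, f x j0 ≠ x j0 ∧ y j0 = f x j0 ∧ ∀ j, j ≠ j0 → y j = x j

/-- Asynchronous transition of a multivalued model h (one coordinate moves by 1 toward its target). -/
def asyncTrans {n : ℕ} (h : (Fin n → ℕ) → Fin n → ℕ) (x y : Fin n → ℕ) : Prop :=
  ∃ j0, h x j0 ≠ x j0 ∧ (∀ j, j ≠ j0 → y j = x j) ∧
    ((x j0 < h x j0 ∧ y j0 = x j0 + 1) ∨ (h x j0 < x j0 ∧ y j0 = x j0 - 1))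

/-- An m.p. state x̂ is compatible with a multivalued state x. -/
def mpCompat {n : ℕ} (m x : Fin n → ℕ) (xh : Fin n → MPLevel) : Prop :=
  ∀ j, (x j = 0 → xh j = MPLevel.zero) ∧ (x j = m j → xh j = MPLevel.one) ∧
    (0 < x j → x j < m j → (xh j = MPLevel.inc ∨ xh j = MPLevel.dec))

/-- h is a multivalued model on X = ∏ {0,…,m_j}: maps X to X, moving each coordinate by at most 1. -/
def isMVModel {n : ℕ} (m : Fin n → ℕ) (h : (Fin n → ℕ) → Fin n → ℕ) : Prop :=
  ∀ x, (∀ j, x j ≤ m j) → ∀ j, h x j ≤ m j ∧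
    (h x j = x j ∨ h x j = x j + 1 ∨ h x j + 1 = x j)

/-- h is a multivalued refinement of the Boolean model f. -/
def isRefinement {n : ℕ} (m : Fin n → ℕ) (f : (Fin n → Bool) → Fin n → Bool)
    (h : (Fin n → ℕ) → Fin n → ℕ) : Prop :=
  ∀ x, (∀ j, x j ≤ m j) → ∀ j,
    (h x j < x j → ∃ x' ∈ mvAlpha m x, f x' j = false ∧ x' j = true) ∧
    (x j < h x j → ∃ x' ∈ mvAlpha m x, f x' j = true ∧ x' j = false)

/-- A literal in a DNF: a regulator index, a polarity, and a threshold (used in the multivalued reading). -/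
structure Lit (n : ℕ) where
  idx : Fin n
  pos : Bool
  thr : ℕ

/-- Boolean evaluation of a literal (threshold ignored). -/
def evalLitB {n : ℕ} (x : Fin n → Bool) (l : Lit n) : Bool :=
  if l.pos then x l.idx else !(x l.idx)

/-- Multivalued evaluation of a literal: x_idx ≥ thr+1 for a positive literal, x_idx < thr+1 otherwise. -/
def evalLitM {n : ℕ} (x : Fin n → ℕ) (l : Lit n) : Bool :=
  if l.pos then decide (l.thr + 1 ≤ x l.idx) else decide (x l.idx < l.thr + 1)

/-- Boolean evaluation of a DNF (list of conjunctive clauses). -/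
def evalDNFB {n : ℕ} (x : Fin n → Bool) (φ : List (List (Lit n))) : Bool :=
  φ.any fun c => c.all (evalLitB x)

/-- Multivalued evaluation of a DNF via the thresholds. -/
def evalDNFM {n : ℕ} (x : Fin n → ℕ) (φ : List (List (Lit n))) : Bool :=
  φ.any fun c => c.all (evalLitM x)

/-- Refinement built from the DNF threshold parameterisation:
h_j(x) = max(0, min(m_j, x_j + H_j(x))) with H_j(x) = +1 iff the multivalued DNF of f_j is true. -/
def hDNF {n : ℕ} (m : Fin n → ℕ) (φ : Fin n → List (List (Lit n)))
    (x : Fin n → ℕ) : Fin n → ℕ :=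
  fun j => if evalDNFM x (φ j) then min (m j) (x j + 1) else x j - 1

lemma compat_zero' {n : ℕ} {m x : Fin n → ℕ} {xh : Fin n → MPLevel}
    (hc : mpCompat m x xh) (hx : ∀ j, x j ≤ m j)
    (j : Fin n) (hz : xh j = MPLevel.zero) : x j = 0 := by
  by_contra hne
  have h1 : 0 < x j := Nat.pos_of_ne_zero hne
  rcases Nat.lt_or_ge (x j) (m j) with h2 | h2
  · rcases (hc j).2.2 h1 h2 with hi | hi <;> rw [hi] at hz <;> exact absurd hz (by simp)
  · have heq : x j = m j := le_antisymm (hx j) h2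
    have := (hc j).2.1 heq
    rw [this] at hz; exact absurd hz (by simp)

lemma compat_one' {n : ℕ} {m x : Fin n → ℕ} {xh : Fin n → MPLevel}
    (hc : mpCompat m x xh) (hx : ∀ j, x j ≤ m j)
    (j : Fin n) (hz : xh j = MPLevel.one) : x j = m j := by
  by_contra hne
  have h2 : x j < m j := lt_of_le_of_ne (hx j) hne
  rcases Nat.eq_zero_or_pos (x j) with h1 | h1
  · have := (hc j).1 h1; rw [this] at hz; exact absurd hz (by simp)
  · rcases (hc j).2.2 h1 h2 with hi | hi <;> rw [hi] at hz <;> exact absurd hz (by simp)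

lemma alpha_sub_gamma {n : ℕ} {m x : Fin n → ℕ} {xh : Fin n → MPLevel}
    (hc : mpCompat m x xh) (hx : ∀ j, x j ≤ m j) :
    mvAlpha m x ⊆ mpGamma xh := by
  intro x' hx' j
  refine ⟨fun hz => ?_, fun ho => ?_⟩
  · exact (hx' j).1 (compat_zero' hc hx j hz)
  · exact (hx' j).2 (compat_one' hc hx j ho)

lemma compat_update {n : ℕ} {m x y : Fin n → ℕ} {xh : Fin n → MPLevel} {j0 : Fin n} {v : MPLevel}
    (hc : mpCompat m x xh) (hy : ∀ j, j ≠ j0 → y j = x j)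
    (h0 : y j0 = 0 → v = MPLevel.zero) (h1 : y j0 = m j0 → v = MPLevel.one)
    (hi : 0 < y j0 → y j0 < m j0 → v = MPLevel.inc ∨ v = MPLevel.dec) :
    mpCompat m y (Function.update xh j0 v) := by
  intro j
  by_cases hj : j = j0
  · subst hj
    simp only [Function.update_self]
    exact ⟨h0, h1, hi⟩
  · rw [Function.update_of_ne hj, hy j hj]
    exact hc j

/-- completeness of the m.p. scheme, single transition: if x → y is an
asynchronous transition of a refinement h of f, then from any m.p. state x̂ compatible with
x there is an m.p. trajectory of f of length at most 2 ending at a state ŷ compatible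
with y. -/
theorem mp_completeness_step {n : ℕ} (f : (Fin n → Bool) → Fin n → Bool)
    (m : Fin n → ℕ) (hm : ∀ j, 1 ≤ m j) (hex : ∃ j, 1 < m j)
    (h : (Fin n → ℕ) → Fin n → ℕ) (hmv : isMVModel m h) (href : isRefinement m f h)
    (x y : Fin n → ℕ) (hx : ∀ j, x j ≤ m j) (ht : asyncTrans h x y)
    (xh : Fin n → MPLevel) (hc : mpCompat m x xh) :
    ∃ yh : Fin n → MPLevel, mpCompat m y yh ∧
      (yh = xh ∨ mpTrans f xh yh ∨ ∃ z, mpTrans f xh z ∧ mpTrans f z yh) := by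
  obtain ⟨j0, hne, hframe, hdir⟩ := ht
  have hub : h x j0 ≤ m j0 := (hmv x hx j0).1
  have hm0 : 1 ≤ m j0 := hm j0
  have tri : x j0 = 0 ∨ x j0 = m j0 ∨ (0 < x j0 ∧ x j0 < m j0) := by
    have := hx j0; omega
  have frame1 : ∀ v : MPLevel, ∀ j, j ≠ j0 → Function.update xh j0 v j = xh j :=
    fun v j hj => Function.update_of_ne hj v xh
  have frame2 : ∀ v w : MPLevel, ∀ j, j ≠ j0 →
      Function.update xh j0 v j = Function.update xh j0 w j :=
    fun v w j hj => by rw [Function.update_of_ne hj, Function.update_of_ne hj]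
  rcases hdir with ⟨hlt, hy0⟩ | ⟨hlt, hy0⟩
  · -- increasing
    have hwit : ∃ x' ∈ mpGamma xh, f x' j0 = true := by
      obtain ⟨x', hx', hf, _⟩ := (href x hx j0).2 hlt
      exact ⟨x', alpha_sub_gamma hc hx hx', hf⟩
    rcases tri with hz | hM | ⟨ha, hb⟩
    · have hx0 : xh j0 = MPLevel.zero := (hc j0).1 hz
      by_cases hM : y j0 = m j0
      · refine ⟨Function.update xh j0 MPLevel.one, ?_, Or.inr (Or.inr
          ⟨Function.update xh j0 MPLevel.inc,
            ⟨j0, frame1 _, Or.inl ⟨Or.inl hx0, hwit, Function.update_self _ _ _⟩⟩,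
            ⟨j0, frame2 _ _, Or.inr (Or.inr (Or.inl
              ⟨Function.update_self _ _ _, Function.update_self _ _ _⟩))⟩⟩)⟩
        exact compat_update hc hframe (fun h => by omega) (fun _ => rfl)
          (fun h1 h2 => by omega)
      · refine ⟨Function.update xh j0 MPLevel.inc, ?_, Or.inr (Or.inl
          ⟨j0, frame1 _, Or.inl ⟨Or.inl hx0, hwit, Function.update_self _ _ _⟩⟩)⟩
        exact compat_update hc hframe (fun h => by omega) (fun h => absurd h hM)
          (fun _ _ => Or.inl rfl)
    · exfalso; omega
    · rcases (hc j0).2.2 ha hb with hxi | hxd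
      · by_cases hM : y j0 = m j0
        · refine ⟨Function.update xh j0 MPLevel.one, ?_, Or.inr (Or.inl
            ⟨j0, frame1 _, Or.inr (Or.inr (Or.inl ⟨hxi, Function.update_self _ _ _⟩))⟩)⟩
          exact compat_update hc hframe (fun h => by omega) (fun _ => rfl)
            (fun h1 h2 => by omega)
        · refine ⟨xh, ?_, Or.inl rfl⟩
          intro j
          by_cases hj : j = j0
          · subst hj
            exact ⟨fun h => by omega, fun h => absurd h hM, fun _ _ => Or.inl hxi⟩
          · rw [hframe j hj]; exact hc j
      · by_cases hM : y j0 = m j0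
        · refine ⟨Function.update xh j0 MPLevel.one, ?_, Or.inr (Or.inr
            ⟨Function.update xh j0 MPLevel.inc,
              ⟨j0, frame1 _, Or.inl ⟨Or.inr hxd, hwit, Function.update_self _ _ _⟩⟩,
              ⟨j0, frame2 _ _, Or.inr (Or.inr (Or.inl
                ⟨Function.update_self _ _ _, Function.update_self _ _ _⟩))⟩⟩)⟩
          exact compat_update hc hframe (fun h => by omega) (fun _ => rfl)
            (fun h1 h2 => by omega)
        · refine ⟨xh, ?_, Or.inl rfl⟩
          intro j
          by_cases hj : j = j0
          · subst hj
            exact ⟨fun h => by omega, fun h => absurd h hM, fun _ _ => Or.inr hxd⟩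
          · rw [hframe j hj]; exact hc j
  · -- decreasing
    have hwit : ∃ x' ∈ mpGamma xh, f x' j0 = false := by
      obtain ⟨x', hx', hf, _⟩ := (href x hx j0).1 hlt
      exact ⟨x', alpha_sub_gamma hc hx hx', hf⟩
    have hpos : 0 < x j0 := by omega
    rcases tri with hz | hM | ⟨ha, hb⟩
    · exfalso; omega
    · have hx1 : xh j0 = MPLevel.one := (hc j0).2.1 hM
      by_cases hZ : y j0 = 0
      · refine ⟨Function.update xh j0 MPLevel.zero, ?_, Or.inr (Or.inr
          ⟨Function.update xh j0 MPLevel.dec,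
            ⟨j0, frame1 _, Or.inr (Or.inl ⟨Or.inl hx1, hwit, Function.update_self _ _ _⟩)⟩,
            ⟨j0, frame2 _ _, Or.inr (Or.inr (Or.inr
              ⟨Function.update_self _ _ _, Function.update_self _ _ _⟩))⟩⟩)⟩
        exact compat_update hc hframe (fun _ => rfl) (fun h => by omega)
          (fun h1 h2 => by omega)
      · refine ⟨Function.update xh j0 MPLevel.dec, ?_, Or.inr (Or.inl
          ⟨j0, frame1 _, Or.inr (Or.inl ⟨Or.inl hx1, hwit, Function.update_self _ _ _⟩)⟩)⟩
        exact compat_update hc hframe (fun h => absurd h hZ) (fun h => by omega)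
          (fun _ _ => Or.inr rfl)
    · rcases (hc j0).2.2 ha hb with hxi | hxd
      · by_cases hZ : y j0 = 0
        · refine ⟨Function.update xh j0 MPLevel.zero, ?_, Or.inr (Or.inr
            ⟨Function.update xh j0 MPLevel.dec,
              ⟨j0, frame1 _, Or.inr (Or.inl ⟨Or.inr hxi, hwit, Function.update_self _ _ _⟩)⟩,
              ⟨j0, frame2 _ _, Or.inr (Or.inr (Or.inr
                ⟨Function.update_self _ _ _, Function.update_self _ _ _⟩))⟩⟩)⟩
          exact compat_update hc hframe (fun _ => rfl) (fun h => by omega)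
            (fun h1 h2 => by omega)
        · refine ⟨xh, ?_, Or.inl rfl⟩
          intro j
          by_cases hj : j = j0
          · subst hj
            exact ⟨fun h => absurd h hZ, fun h => by omega, fun _ _ => Or.inl hxi⟩
          · rw [hframe j hj]; exact hc j
      · by_cases hZ : y j0 = 0
        · refine ⟨Function.update xh j0 MPLevel.zero, ?_, Or.inr (Or.inl
            ⟨j0, frame1 _, Or.inr (Or.inr (Or.inr ⟨hxd, Function.update_self _ _ _⟩))⟩)⟩
          exact compat_update hc hframe (fun _ => rfl) (fun h => by omega)
            (fun h1 h2 => by omega)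
        · refine ⟨xh, ?_, Or.inl rfl⟩
          intro j
          by_cases hj : j = j0
          · subst hj
            exact ⟨fun h => absurd h hZ, fun h => by omega, fun _ _ => Or.inr hxd⟩
          · rw [hframe j hj]; exact hc j
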